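/- There exists a real α₀ > 0 such that for every α ∈ (0, α₀) there exist δ > 0 and n₀ with the following property: for all n ≥ n₀, no pair of integers (m_A, m_B) with |m_A − n| ≤ δn and |m_B − h(α)·n| ≤ δn is achievable for the deterministic combinatorial Slepian–Wolf scheme with parameters (n, ⌊αn⌋); symmetrically, no pair with |m_A − h(α)·n| ≤ δn and |m_B − n| ≤ δn is achievable. -/

import Mathlib

set_option maxHeartbeats 2000000

/-- The binary entropy function `h(α) = −α·log₂ α − (1−α)·log₂(1−α)`. -/
noncomputable def binEnt (a : ℝ) : ℝ :=
  -a * Real.logb 2 a - (1 - a) * Real.logb 2 (1 - a)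

/-- A pair of encodings is uniquely decodable for the combinatorial Slepian–Wolf
scheme with parameters `(n, T)`. -/
def UniquelyDecodable {n mA mB : ℕ} (T : ℕ)
    (CodeA : (Fin n → Bool) → (Fin mA → Bool))
    (CodeB : (Fin n → Bool) → (Fin mB → Bool)) : Prop :=
  ∀ x y x' y' : Fin n → Bool,
    hammingDist x y ≤ T → hammingDist x' y' ≤ T →
    CodeA x = CodeA x' → CodeB y = CodeB y' → (x, y) = (x', y')

/-- `(mA, mB)` is an achievable pair of rates for the deterministic combinatorial
Slepian–Wolf scheme with parameters `(n, T)`. -/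
def Achievable (n T mA mB : ℕ) : Prop :=
  ∃ (CodeA : (Fin n → Bool) → (Fin mA → Bool))
    (CodeB : (Fin n → Bool) → (Fin mB → Bool)),
    UniquelyDecodable T CodeA CodeB

namespace SWAux

open Finset Filter Real

lemma midPt (n T : ℕ) (y y' : Fin n → Bool) (h : hammingDist y y' ≤ 2*T) :
    ∃ x, hammingDist x y ≤ T ∧ hammingDist x y' ≤ T := by
  classical
  set D : Finset (Fin n) := {i | y i ≠ y' i} with hD
  have hDcard : D.card = hammingDist y y' := rfl
  obtain ⟨S, hSD, hScard⟩ := Finset.exists_subset_card_eq (s := D) (n := min T D.card) (min_le_right _ _)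
  refine ⟨fun i => if i ∈ S then y' i else y i, ?_, ?_⟩
  · have : ({i | (if i ∈ S then y' i else y i) ≠ y i} : Finset (Fin n)) = S := by
      ext i
      simp only [mem_filter, mem_univ, true_and]
      by_cases hi : i ∈ S <;> simp [hi]
      exact fun hc => (mem_filter.mp (hSD hi)).2 hc.symm
    rw [hammingDist, this]; omega
  · have : ({i | (if i ∈ S then y' i else y i) ≠ y' i} : Finset (Fin n)) = D \ S := by
      ext i
      simp only [mem_filter, mem_univ, true_and, mem_sdiff]
      by_cases hi : i ∈ S <;> simp [hi, hD]
    rw [hammingDist, this, card_sdiff_of_subset hSD]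
    omega


lemma sphere_card (n e : ℕ) (c : Fin n → Bool) :
    ((Finset.univ : Finset (Fin n → Bool)).filter fun z => hammingDist c z = e).card
      = n.choose e := by
  classical
  have h1 : (Finset.powersetCard e (univ : Finset (Fin n))).card = n.choose e := by
    simp [Finset.card_powersetCard]
  rw [← h1]
  apply Finset.card_bij' (i := fun z _ => ({i | c i ≠ z i} : Finset (Fin n)))
    (j := fun s _ => fun i => if i ∈ s then !(c i) else c i)
  · intro z hz
    simp only [mem_filter, mem_univ, true_and] at hz
    rw [Finset.mem_powersetCard]
    exact ⟨Finset.subset_univ _, hz⟩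
  · intro s hs
    rw [Finset.mem_powersetCard] at hs
    simp only [mem_filter, mem_univ, true_and]
    rw [← hs.2, hammingDist]
    congr 1
    ext i
    by_cases hi : i ∈ s <;> simp [hi]
  · intro z hz
    funext i
    by_cases hi : c i = z i <;> simp [hi]
    · cases hc : c i <;> cases hz' : z i <;> simp_all
  · intro s hs
    ext i
    by_cases hi : i ∈ s <;> simp [hi]



lemma double_count (n e : ℕ) (C : Finset (Fin n → Bool)) :
    C.card * n.choose e ≤
      ∑ z : Fin n → Bool, (C.filter fun c => hammingDist c z ≤ e).card := by
  classical
  have swap : ∑ z : Fin n → Bool, (C.filter fun c => hammingDist c z ≤ e).card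
      = ∑ c ∈ C, ((Finset.univ : Finset (Fin n → Bool)).filter
          fun z => hammingDist c z ≤ e).card := by
    simp only [Finset.card_filter]
    exact Finset.sum_comm
  rw [swap]
  have hball : ∀ c : Fin n → Bool, n.choose e ≤
      ((Finset.univ : Finset (Fin n → Bool)).filter fun z => hammingDist c z ≤ e).card := by
    intro c
    rw [← sphere_card n e c]
    apply Finset.card_le_card
    intro z hz
    simp only [Finset.mem_filter] at hz ⊢
    exact ⟨hz.1, le_of_eq hz.2⟩
  calc C.card * n.choose e = ∑ _c ∈ C, n.choose e := by rw [Finset.sum_const, smul_eq_mul]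
    _ ≤ _ := Finset.sum_le_sum fun c _ => hball c


lemma johnson (n d e : ℕ) (z : Fin n → Bool) (C : Finset (Fin n → Bool))
    (hdist : ∀ u ∈ C, ∀ v ∈ C, u ≠ v → d ≤ hammingDist u v)
    (hball : ∀ v ∈ C, hammingDist v z ≤ e)
    (he : 2*e ≤ n) :
    (C.card : ℝ) * ((d*n : ℝ) - 2*e*((n:ℝ)-e)) ≤ (d*n : ℝ) := by
  classical
  rcases Finset.eq_empty_or_nonempty C with rfl | hCne
  · simp
    positivity
  set M := C.card with hM
  have hMpos : 0 < M := Finset.card_pos.mpr hCne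
  set b : Fin n → ℕ := fun j => (C.filter fun v => v j ≠ z j).card with hb
  set K := ∑ j, b j with hK
  have hbM : ∀ j, b j ≤ M := fun j => Finset.card_filter_le _ _
  -- K ≤ M * e
  have hKMe : K ≤ M * e := by
    have h1 : K = ∑ v ∈ C, hammingDist v z := by
      rw [hK]
      simp only [hb, hammingDist, Finset.card_filter]
      exact Finset.sum_comm
    rw [h1]
    calc ∑ v ∈ C, hammingDist v z ≤ ∑ _v ∈ C, e := Finset.sum_le_sum fun v hv => hball v hv
      _ = M * e := by rw [Finset.sum_const, smul_eq_mul]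
  -- per-coordinate pair count
  have hcount : ∀ j, ((C ×ˢ C).filter (fun p => p.1 j ≠ p.2 j)).card
      = 2 * (b j * (M - b j)) := by
    intro j
    have hprod : ((C ×ˢ C).filter (fun p => p.1 j ≠ p.2 j)).card
        = ∑ u ∈ C, (C.filter fun v => v j ≠ u j).card := by
      rw [Finset.card_filter, Finset.sum_product]
      apply Finset.sum_congr rfl
      intro u _
      rw [Finset.card_filter]
      apply Finset.sum_congr rfl
      intro v _
      by_cases h : u j = v j <;> simp [h, Ne, eq_comm]
    rw [hprod]
    have hnegcard : (C.filter fun v => ¬ (v j = z j)).card = b j := by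
      simp only [hb, Ne]
    have hposcard : (C.filter fun v => v j = z j).card = M - b j := by
      have h2 := Finset.card_filter_add_card_filter_not
        (s := C) (fun v => v j = z j)
      rw [← hnegcard, hM]
      exact Nat.eq_sub_of_add_eq h2
    have hsplit : ∀ u ∈ C, (C.filter fun v => v j ≠ u j).card
        = if u j = z j then b j else M - b j := by
      intro u _
      by_cases h : u j = z j
      · simp only [h, if_true]; rfl
      · simp only [h, if_false]
        rw [← hposcard]
        congr 1
        apply Finset.filter_congr
        intro v _
        constructor
        · intro hne
          cases hvz : v j <;> cases huz : u j <;> cases hzz : z j <;> simp_all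
        · intro heq
          rw [heq]; exact fun hc => h hc.symm
    rw [Finset.sum_congr rfl hsplit]
    rw [Finset.sum_ite, Finset.sum_const, Finset.sum_const]
    rw [hposcard, hnegcard]
    simp only [smul_eq_mul]
    generalize M - b j = a
    ring
  -- pair sum lower bound (ℕ)
  have hpairs : C.offDiag.card * d ≤ ∑ j, 2 * (b j * (M - b j)) := by
    have hsum : ∑ p ∈ C.offDiag, hammingDist p.1 p.2 = ∑ j, 2 * (b j * (M - b j)) := by
      have hswap : ∑ p ∈ C.offDiag, hammingDist p.1 p.2
          = ∑ j, (C.offDiag.filter (fun p => p.1 j ≠ p.2 j)).card := by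
        simp only [hammingDist, Finset.card_filter]
        exact Finset.sum_comm
      rw [hswap]
      apply Finset.sum_congr rfl
      intro j _
      rw [← hcount j]
      congr 1
      ext p
      simp only [Finset.mem_filter, Finset.mem_offDiag, Finset.mem_product]
      constructor
      · rintro ⟨⟨h1, h2, -⟩, h4⟩; exact ⟨⟨h1, h2⟩, h4⟩
      · rintro ⟨⟨h1, h2⟩, h4⟩
        exact ⟨⟨h1, h2, fun hc => h4 (by rw [hc])⟩, h4⟩
    rw [← hsum]
    calc C.offDiag.card * d = ∑ _p ∈ C.offDiag, d := by rw [Finset.sum_const, smul_eq_mul]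
      _ ≤ ∑ p ∈ C.offDiag, hammingDist p.1 p.2 := by
          apply Finset.sum_le_sum
          rintro ⟨u, v⟩ hp
          rw [Finset.mem_offDiag] at hp
          exact hdist u hp.1 v hp.2.1 hp.2.2
  -- move to ℝ
  have hpairsR : (M:ℝ) * ((M:ℝ) - 1) * d ≤ 2 * (M:ℝ) * K - 2 * ∑ j, (b j : ℝ)^2 := by
    have hcast : ((C.offDiag.card * d : ℕ) : ℝ) = (M:ℝ) * ((M:ℝ) - 1) * d := by
      rw [Finset.offDiag_card, ← hM]
      push_cast [Nat.cast_sub (Nat.le_mul_of_pos_left M hMpos)]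
      ring
    have hrhs : ((∑ j, 2 * (b j * (M - b j)) : ℕ) : ℝ)
        = 2 * (M:ℝ) * K - 2 * ∑ j, (b j : ℝ)^2 := by
      push_cast [Nat.cast_sub (hbM _)]
      have h3 : ∀ j ∈ (univ : Finset (Fin n)), 2 * ((b j:ℝ) * ((M:ℝ) - b j))
          = 2 * (M:ℝ) * b j - 2 * (b j:ℝ)^2 := by intro j _; ring
      rw [Finset.sum_congr rfl h3, Finset.sum_sub_distrib, ← Finset.mul_sum, ← Finset.mul_sum,
        hK]
      push_cast
      ring
    rw [← hcast, ← hrhs]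
    exact_mod_cast hpairs
  have hCS : (K:ℝ)^2 ≤ (n:ℝ) * ∑ j, (b j : ℝ)^2 := by
    have h4 := sq_sum_le_card_mul_sum_sq (s := (univ : Finset (Fin n)))
      (f := fun j => (b j : ℝ))
    rw [hK]
    push_cast
    simpa using h4
  -- final arithmetic
  have hKr : (K:ℝ) ≤ (M:ℝ) * e := by exact_mod_cast hKMe
  have hMr : (1:ℝ) ≤ (M:ℝ) := by exact_mod_cast hMpos
  have her : 2*(e:ℝ) ≤ (n:ℝ) := by exact_mod_cast he
  have hKnn : (0:ℝ) ≤ K := Nat.cast_nonneg _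
  have hdnn : (0:ℝ) ≤ d := Nat.cast_nonneg _
  rcases Nat.eq_zero_or_pos n with rfl | hnpos
  · have he0 : e = 0 := by omega
    subst he0
    simp
  have hnr : (1:ℝ) ≤ (n:ℝ) := by exact_mod_cast hnpos
  have step1 : (n:ℝ) * ((M:ℝ) * ((M:ℝ) - 1) * d) ≤ 2*(K:ℝ)*((n:ℝ)*(M:ℝ) - K) := by
    have h6 := mul_le_mul_of_nonneg_left hpairsR (show (0:ℝ) ≤ (n:ℝ) from Nat.cast_nonneg n)
    nlinarith [h6, hCS]
  have hA : (0:ℝ) ≤ (M:ℝ)*e - K := by linarith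
  have hB : (0:ℝ) ≤ (n:ℝ)*(M:ℝ) - (M:ℝ)*e - K := by
    nlinarith [mul_nonneg (show (0:ℝ) ≤ (M:ℝ) by linarith) (show (0:ℝ) ≤ (n:ℝ) - 2*e by linarith)]
  have step2 : 2*(K:ℝ)*((n:ℝ)*(M:ℝ) - K) ≤ 2*((M:ℝ)*e)*((n:ℝ)*(M:ℝ) - (M:ℝ)*e) := by
    nlinarith [mul_nonneg hA hB]
  have step3 : (n:ℝ) * ((M:ℝ) * ((M:ℝ) - 1) * d) ≤ 2*(M:ℝ)^2*(e:ℝ)*((n:ℝ)-e) := by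
    nlinarith [step1, step2]
  have h5 : (M:ℝ) * ((M:ℝ)*((d:ℝ)*(n:ℝ) - 2*(e:ℝ)*((n:ℝ)-(e:ℝ))) - (d:ℝ)*(n:ℝ)) ≤ 0 := by
    nlinarith [step3]
  by_contra hcon
  push_neg at hcon
  nlinarith [h5, hMr, hcon]


lemma choose_entropy_nat (n k : ℕ) (hk : k ≤ n) :
    n^n ≤ (n+1) * (n.choose k * (k^k * (n-k)^(n-k))) := by
  set t : ℕ → ℕ := fun j => n.choose j * (k^j * (n-k)^(n-j)) with ht
  have hratio : ∀ j, j < n → (j+1) * (n-k) * t (j+1) = (n-j) * k * t j := by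
    intro j hj
    have h1 : n.choose (j+1) * (j+1) = n.choose j * (n - j) := Nat.choose_succ_right_eq n j
    have h2 : (n-k)^(n-j) = (n-k)^(n-(j+1)) * (n-k) := by
      rw [← pow_succ]
      congr 1
      omega
    simp only [ht]
    calc (j+1) * (n-k) * (n.choose (j+1) * (k^(j+1) * (n-k)^(n-(j+1))))
        = (n.choose (j+1) * (j+1)) * (k^(j+1) * ((n-k)^(n-(j+1)) * (n-k))) := by ring
      _ = (n.choose j * (n-j)) * (k^(j+1) * (n-k)^(n-j)) := by rw [h1, ← h2]
      _ = (n-j) * k * (n.choose j * (k^j * (n-k)^(n-j))) := by rw [pow_succ]; ring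
  have hup : ∀ j, j < k → t j ≤ t (j+1) := by
    intro j hj
    rcases Nat.eq_zero_or_pos (n-k) with hz | hpos
    · have : t j = 0 := by
        simp only [ht, hz]
        rw [zero_pow (by omega)]
        ring_nf
      omega
    · refine Nat.le_of_mul_le_mul_left ?_ (show 0 < (j+1) * (n-k) by positivity)
      rw [hratio j (by omega)]
      have h7 : (j+1) * (n-k) ≤ (n-j) * k := by
        have := Nat.mul_le_mul (show j+1 ≤ k by omega) (show n-k ≤ n-j by omega)
        calc (j+1) * (n-k) ≤ k * (n-j) := this
          _ = (n-j) * k := by ring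
      exact Nat.mul_le_mul_right _ h7
  have hdown : ∀ j, k ≤ j → j < n → t (j+1) ≤ t j := by
    intro j hkj hj
    have hpos : 0 < n - k := by omega
    refine Nat.le_of_mul_le_mul_left ?_ (show 0 < (j+1) * (n-k) by positivity)
    have h7 : (n-j) * k ≤ (j+1) * (n-k) := by
      have := Nat.mul_le_mul (show n-j ≤ n-k by omega) (show k ≤ j+1 by omega)
      calc (n-j) * k ≤ (n-k) * (j+1) := this
        _ = (j+1) * (n-k) := by ring
    calc (j+1) * (n-k) * t (j+1) = (n-j) * k * t j := hratio j hj
      _ ≤ (j+1) * (n-k) * t j := Nat.mul_le_mul_right _ h7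
  have hmax : ∀ j, j ≤ n → t j ≤ t k := by
    have hupc : ∀ m, m ≤ k → t (k - m) ≤ t k := by
      intro m
      induction m with
      | zero => intro _; simp
      | succ p ih =>
        intro hpk
        have h8 : t (k - (p+1)) ≤ t (k - (p+1) + 1) := hup _ (by omega)
        have h9 : k - (p+1) + 1 = k - p := by omega
        rw [h9] at h8
        exact le_trans h8 (ih (by omega))
    have hdnc : ∀ m, k + m ≤ n → t (k + m) ≤ t k := by
      intro m
      induction m with
      | zero => intro _; simp
      | succ p ih =>
        intro hpn
        have h8 : t (k + p + 1) ≤ t (k + p) := hdown _ (by omega) (by omega)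
        have h9 : k + (p+1) = k + p + 1 := by omega
        rw [h9]
        exact le_trans h8 (ih (by omega))
    intro j hj
    rcases le_total j k with h | h
    · have : j = k - (k - j) := by omega
      rw [this]
      exact hupc _ (by omega)
    · have : j = k + (j - k) := by omega
      rw [this]
      exact hdnc _ (by omega)
  have hbinom : n^n = ∑ j ∈ Finset.range (n+1), t j := by
    have := add_pow k (n-k) n
    have hkk : k + (n-k) = n := by omega
    rw [hkk] at this
    rw [this]
    apply Finset.sum_congr rfl
    intro j hj
    simp only [ht, Nat.cast_id]
    ring
  calc n^n = ∑ j ∈ Finset.range (n+1), t j := hbinom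
    _ ≤ ∑ _j ∈ Finset.range (n+1), t k := Finset.sum_le_sum (fun j hj => hmax j (by
        simp only [Finset.mem_range] at hj; omega))
    _ = (n+1) * t k := by rw [Finset.sum_const, Finset.card_range, smul_eq_mul]



lemma binEnt_eq (a : ℝ) : binEnt a = Real.binEntropy a / Real.log 2 := by
  rw [binEnt, Real.binEntropy, Real.logb, Real.logb]
  rw [Real.log_inv, Real.log_inv]
  ring

lemma binEnt_strict_mono {x y : ℝ} (hx : 0 ≤ x) (hxy : x < y) (hy : y ≤ 1/2) :
    binEnt x < binEnt y := by
  rw [binEnt_eq, binEnt_eq]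
  have h2 := Real.binEntropy_strictMonoOn (Set.mem_Icc.mpr ⟨hx, by linarith⟩)
    (Set.mem_Icc.mpr ⟨by linarith, by norm_num; linarith⟩) hxy
  exact div_lt_div_of_pos_right h2 (Real.log_pos one_lt_two)

lemma binEnt_mono {x y : ℝ} (hx : 0 ≤ x) (hxy : x ≤ y) (hy : y ≤ 1/2) :
    binEnt x ≤ binEnt y := by
  rcases eq_or_lt_of_le hxy with rfl | h
  · exact le_rfl
  · exact le_of_lt (binEnt_strict_mono hx h hy)

lemma binEnt_continuous : Continuous binEnt := by
  have : binEnt = fun a => Real.binEntropy a / Real.log 2 := funext binEnt_eq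
  rw [this]
  exact Real.binEntropy_continuous.div_const _

lemma binEnt_div (e n : ℕ) (he : 1 ≤ e) (hen : e < n) :
    (n:ℝ) * binEnt ((e:ℝ)/n) = n * Real.logb 2 n - e * Real.logb 2 e
      - ((n:ℝ)-e) * Real.logb 2 ((n:ℝ)-e) := by
  have hn : (0:ℝ) < n := by exact_mod_cast lt_of_le_of_lt (Nat.zero_le e) hen
  have he' : (0:ℝ) < e := by exact_mod_cast he
  have hne : (0:ℝ) < (n:ℝ) - e := by
    have : (e:ℝ) < n := by exact_mod_cast hen
    linarith
  have h1 : (1:ℝ) - (e:ℝ)/n = ((n:ℝ)-e)/n := by field_simp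
  have h2 : Real.logb 2 ((e:ℝ)/n) = Real.logb 2 e - Real.logb 2 n :=
    Real.logb_div (ne_of_gt he') (ne_of_gt hn)
  have h3 : Real.logb 2 (((n:ℝ)-e)/n) = Real.logb 2 ((n:ℝ)-e) - Real.logb 2 n :=
    Real.logb_div (ne_of_gt hne) (ne_of_gt hn)
  rw [binEnt, h1, h2, h3]
  field_simp
  ring



lemma achievable_swap {n T mA mB : ℕ} (h : Achievable n T mA mB) : Achievable n T mB mA := by
  obtain ⟨CA, CB, h⟩ := h
  exact ⟨CB, CA, fun x y x' y' hd hd' hB hA => by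
    have := h y x y' x' (by rwa [hammingDist_comm]) (by rwa [hammingDist_comm]) hA hB
    simpa [Prod.ext_iff, and_comm] using this⟩

lemma keyB {n T mA mB : ℕ} (h : Achievable n T mA mB) :
    ∃ C : Finset (Fin n → Bool),
      (∀ u ∈ C, ∀ v ∈ C, u ≠ v → 2*T < hammingDist u v) ∧ 2^n ≤ 2^mB * C.card := by
  classical
  obtain ⟨CA, CB, hud⟩ := h
  -- separation within fibers
  have hsep : ∀ y y', CB y = CB y' → hammingDist y y' ≤ 2*T → y = y' := by
    intro y y' hB hd
    obtain ⟨x, hx, hx'⟩ := midPt n T y y' hd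
    have := hud x y x y' hx hx' rfl hB
    exact (Prod.ext_iff.mp this).2
  -- pigeonhole: a big fiber
  obtain ⟨b, -, hb⟩ := Finset.exists_max_image (univ : Finset (Fin mB → Bool))
    (fun b => ({y : Fin n → Bool | CB y = b} : Finset _).card) ⟨Classical.arbitrary _, mem_univ _⟩
  refine ⟨Finset.univ.filter (fun y => CB y = b), ?_, ?_⟩
  · intro u hu v hv huv
    by_contra hle
    simp only [mem_filter] at hu hv
    exact huv (hsep u v (by rw [hu.2, hv.2]) (by omega))
  · have hcard : (univ : Finset (Fin n → Bool)).card
        = ∑ c : Fin mB → Bool, ({y : Fin n → Bool | CB y = c} : Finset _).card :=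
      Finset.card_eq_sum_card_fiberwise (fun x _ => mem_univ (CB x))
    have h1 : (univ : Finset (Fin n → Bool)).card = 2^n := by
      simp [Fintype.card_fun]
    have h2 : (univ : Finset (Fin mB → Bool)).card = 2^mB := by
      simp [Fintype.card_fun]
    calc 2^n = ∑ c : Fin mB → Bool, ({y : Fin n → Bool | CB y = c} : Finset _).card := by
          rw [← h1, hcard]
      _ ≤ ∑ _c : Fin mB → Bool, ({y : Fin n → Bool | CB y = b} : Finset _).card :=
          Finset.sum_le_sum (fun c _ => hb c (mem_univ c))
      _ = 2^mB * (Finset.univ.filter (fun y => CB y = b)).card := by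
          rw [Finset.sum_const, ← h2]; simp [mul_comm]

lemma corner {α : ℝ} (hα0 : 0 < α) (hα : α < 1/4) :
    ∃ δ : ℝ, 0 < δ ∧ ∃ n₀ : ℕ, ∀ n : ℕ, n₀ ≤ n → ∀ mA mB : ℕ,
      (mB:ℝ) ≤ (binEnt α + δ) * n → ¬ Achievable n ⌊α*n⌋₊ mA mB := by
  have hβα : α < α*(1+α) := by nlinarith
  have hβhalf : α*(1+α) < 1/2 := by nlinarith
  have hβ0 : 0 < α*(1+α) := by nlinarith
  set β := α*(1+α) with hβeq
  have hδ0 : 0 < (binEnt β - binEnt α)/8 := by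
    have := binEnt_strict_mono (le_of_lt hα0) hβα (by linarith)
    linarith
  set δ := (binEnt β - binEnt α)/8 with hδeq
  have hgap : binEnt α + 8*δ = binEnt β := by rw [hδeq]; ring
  refine ⟨δ, hδ0, ?_⟩
  set Lb : ℝ := 3/(2*α^2) with hLbeq
  have hLbpos : 0 < Lb := by positivity
  -- eventual facts
  have evA1 : ∀ᶠ n : ℕ in atTop, (3:ℝ) ≤ 2*α^3*(n:ℝ) :=
    Filter.Tendsto.eventually_ge_atTop
      ((tendsto_natCast_atTop_atTop (R := ℝ)).const_mul_atTop (by positivity)) 3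
  have evA3 : ∀ᶠ n : ℕ in atTop, binEnt α + 7*δ ≤ binEnt ((⌊β*(n:ℝ)⌋₊:ℝ)/(n:ℝ)) := by
    have hconv : Filter.Tendsto (fun n:ℕ => ((⌊β*(n:ℝ)⌋₊:ℝ)/(n:ℝ))) atTop (nhds β) :=
      (tendsto_nat_floor_mul_div_atTop (le_of_lt hβ0)).comp tendsto_natCast_atTop_atTop
    have hc2 : Filter.Tendsto (fun n:ℕ => binEnt ((⌊β*(n:ℝ)⌋₊:ℝ)/(n:ℝ))) atTop
        (nhds (binEnt β)) := (binEnt_continuous.continuousAt.tendsto).comp hconv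
    exact hc2.eventually (eventually_ge_nhds (by linarith))
  have evA4 : ∀ᶠ n : ℕ in atTop,
      Real.logb 2 ((n:ℝ)+1) + Real.logb 2 Lb < 6*δ*(n:ℝ) := by
    have hmap : Filter.Tendsto (fun n:ℕ => (n:ℝ)+1) atTop atTop :=
      tendsto_atTop_add_const_right _ 1 tendsto_natCast_atTop_atTop
    have hlog := Asymptotics.IsLittleO.def Real.isLittleO_log_id_atTop
      (show (0:ℝ) < δ*Real.log 2 by positivity)
    have h1 : ∀ᶠ n:ℕ in atTop,
        ‖Real.log ((n:ℝ)+1)‖ ≤ δ*Real.log 2*‖(n:ℝ)+1‖ := hmap.eventually hlog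
    have h2 : ∀ᶠ n:ℕ in atTop, Real.logb 2 Lb + 2*δ < 5*δ*(n:ℝ) :=
      Filter.Tendsto.eventually_gt_atTop
        ((tendsto_natCast_atTop_atTop (R := ℝ)).const_mul_atTop (by positivity)) _
    filter_upwards [h1, h2] with n h1 h2
    have hn0 : (0:ℝ) ≤ (n:ℝ) := Nat.cast_nonneg n
    have hl1 : Real.log ((n:ℝ)+1) ≤ δ*Real.log 2*((n:ℝ)+1) := by
      have := le_abs_self (Real.log ((n:ℝ)+1))
      rw [Real.norm_eq_abs, Real.norm_eq_abs] at h1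
      have habs : |(n:ℝ)+1| = (n:ℝ)+1 := abs_of_nonneg (by linarith)
      rw [habs] at h1
      linarith
    have hlb : Real.logb 2 ((n:ℝ)+1) ≤ δ*((n:ℝ)+1) := by
      rw [Real.logb, div_le_iff₀ (Real.log_pos one_lt_two)]
      linarith [hl1]
    linarith
  rw [Filter.eventually_atTop] at evA1 evA3 evA4
  obtain ⟨n₁, hn₁⟩ := evA1
  obtain ⟨n₃, hn₃⟩ := evA3
  obtain ⟨n₄, hn₄⟩ := evA4
  refine ⟨max n₁ (max n₃ n₄), ?_⟩
  intro n hn mA mB hmB hach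
  have f1 : (3:ℝ) ≤ 2*α^3*(n:ℝ) := hn₁ n (le_trans (le_max_left _ _) hn)
  have f3 : binEnt α + 7*δ ≤ binEnt ((⌊β*(n:ℝ)⌋₊:ℝ)/(n:ℝ)) :=
    hn₃ n (le_trans (le_trans (le_max_left _ _) (le_max_right n₁ _)) hn)
  have f4 : Real.logb 2 ((n:ℝ)+1) + Real.logb 2 Lb < 6*δ*(n:ℝ) :=
    hn₄ n (le_trans (le_trans (le_max_right _ _) (le_max_right n₁ _)) hn)
  -- basic numeric facts
  have hα3 : α^3 ≤ 1 := by nlinarith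
  have hn1 : (1:ℝ) ≤ (n:ℝ) := by nlinarith
  have hnpos : (0:ℝ) < (n:ℝ) := by linarith
  have hn0r : (0:ℝ) ≤ (n:ℝ) := by linarith
  have hαn1 : (1:ℝ) ≤ α*(n:ℝ) := by nlinarith
  set T := ⌊α*(n:ℝ)⌋₊ with hTeq
  set d := 2*T+1 with hdeq
  set e := ⌊β*(n:ℝ)⌋₊ with heeq
  have hTub : (T:ℝ) ≤ α*(n:ℝ) := Nat.floor_le (by positivity)
  have hTlb : α*(n:ℝ) - 1 < (T:ℝ) := by
    have := Nat.lt_floor_add_one (α*(n:ℝ))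
    linarith
  have heub : (e:ℝ) ≤ β*(n:ℝ) := Nat.floor_le (by positivity)
  have helb : β*(n:ℝ) - 1 < (e:ℝ) := by
    have := Nat.lt_floor_add_one (β*(n:ℝ))
    linarith
  have he1 : 1 ≤ e := by
    apply Nat.le_floor
    push_cast
    nlinarith
  have hen : e < n := by
    have h5 : (e:ℝ) < (n:ℝ) := by nlinarith
    exact_mod_cast h5
  have he2n : 2*e ≤ n := by
    have h5 : ((2*e:ℕ):ℝ) ≤ (n:ℝ) := by push_cast; nlinarith
    exact_mod_cast h5
  have hne1 : (1:ℝ) ≤ (n:ℝ) - e := by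
    have h5 : ((e:ℕ):ℝ) + 1 ≤ (n:ℝ) := by
      have : ((e+1:ℕ):ℝ) ≤ ((n:ℕ):ℝ) := by exact_mod_cast hen
      push_cast at this
      linarith
    linarith
  -- the code from achievability
  obtain ⟨C, hsep, hcard⟩ := keyB hach
  have hd : ∀ u ∈ C, ∀ v ∈ C, u ≠ v → d ≤ hammingDist u v := by
    intro u hu v hv huv
    have := hsep u hu v hv huv
    omega
  -- denominator bound
  set D : ℝ := ((d:ℕ):ℝ)*(n:ℝ) - 2*(e:ℝ)*((n:ℝ)-(e:ℝ)) with hDeq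
  have hdR : ((d:ℕ):ℝ) = 2*(T:ℝ)+1 := by rw [hdeq]; push_cast; ring
  have hDlb : 2*α^3*(n:ℝ)^2 ≤ D := by
    have hdn : 2*α*(n:ℝ)^2 - (n:ℝ) ≤ ((d:ℕ):ℝ)*(n:ℝ) := by
      rw [hdR]; nlinarith
    have hee : 2*(e:ℝ)*((n:ℝ)-(e:ℝ)) ≤ 2*(β*(n:ℝ))*((1-β)*(n:ℝ)+1) := by
      have h6 : (0:ℝ) ≤ (e:ℝ) := Nat.cast_nonneg e
      have h7 : (n:ℝ)-(e:ℝ) ≤ (1-β)*(n:ℝ)+1 := by nlinarith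
      have h8 : (0:ℝ) ≤ (n:ℝ)-(e:ℝ) := by linarith
      nlinarith
    have hkey : 2*α - 2*β*(1-β) = 4*α^3+2*α^4 := by rw [hβeq]; ring
    have hβub : β ≤ 1/2 := le_of_lt hβhalf
    have hα4 : (0:ℝ) ≤ α^4 := by positivity
    nlinarith [hdn, hee, hkey, hn0r, hnpos, hα4, sq_nonneg (n:ℝ),
      mul_le_mul_of_nonneg_right f1 hn0r,
      mul_nonneg hα4 (sq_nonneg (n:ℝ)),
      mul_nonneg (show (0:ℝ) ≤ 1-2*β by linarith) hn0r]
  have hDpos : (0:ℝ) < D := lt_of_lt_of_le (by positivity) hDlb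
  have hdnub : ((d:ℕ):ℝ)*(n:ℝ) ≤ 3*α*(n:ℝ)^2 := by
    rw [hdR]; nlinarith
  have hLbound : ∀ z : Fin n → Bool,
      (((C.filter fun c => hammingDist c z ≤ e).card : ℕ) : ℝ) ≤ Lb := by
    intro z
    have hj := johnson n d e z (C.filter fun c => hammingDist c z ≤ e)
      (fun u hu v hv huv => hd u (Finset.mem_filter.mp hu).1 v (Finset.mem_filter.mp hv).1 huv)
      (fun v hv => (Finset.mem_filter.mp hv).2) he2n
    have h9 : (((C.filter fun c => hammingDist c z ≤ e).card : ℕ) : ℝ)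
        ≤ ((d:ℕ):ℝ)*(n:ℝ)/D := by
      rw [le_div_iff₀ hDpos]
      exact hj
    have h10 : ((d:ℕ):ℝ)*(n:ℝ)/D ≤ Lb := by
      rw [div_le_iff₀ hDpos]
      have h11 : Lb * (2*α^3*(n:ℝ)^2) = 3*α*(n:ℝ)^2 := by
        rw [hLbeq]; field_simp
      nlinarith [mul_le_mul_of_nonneg_left hDlb (le_of_lt hLbpos)]
    linarith
  have hsum : (∑ z : Fin n → Bool, (((C.filter fun c => hammingDist c z ≤ e).card : ℕ):ℝ))
      ≤ (2:ℝ)^n * Lb := by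
    have hcardu : ((Finset.univ : Finset (Fin n → Bool)).card : ℝ) = (2:ℝ)^n := by
      rw [Finset.card_univ]
      simp [Fintype.card_fun]
    calc ∑ z : Fin n → Bool, (((C.filter fun c => hammingDist c z ≤ e).card : ℕ):ℝ)
        ≤ ∑ _z : Fin n → Bool, Lb := Finset.sum_le_sum (fun z _ => hLbound z)
      _ = (2:ℝ)^n * Lb := by
          rw [Finset.sum_const, nsmul_eq_mul, hcardu]
  have hchoose : ((n.choose e : ℕ):ℝ) ≤ (2:ℝ)^mB * Lb := by
    have hdc : ((C.card : ℕ):ℝ) * ((n.choose e : ℕ):ℝ)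
        ≤ ∑ z : Fin n → Bool, (((C.filter fun c => hammingDist c z ≤ e).card : ℕ):ℝ) := by
      have := double_count n e C
      push_cast
      exact_mod_cast this
    have hcR : (2:ℝ)^n ≤ (2:ℝ)^mB * (C.card:ℝ) := by exact_mod_cast hcard
    have h2n : (0:ℝ) < (2:ℝ)^n := by positivity
    have hchain : (2:ℝ)^n * ((n.choose e : ℕ):ℝ) ≤ (2:ℝ)^n * ((2:ℝ)^mB * Lb) := by
      calc (2:ℝ)^n * ((n.choose e : ℕ):ℝ)
          ≤ ((2:ℝ)^mB * (C.card:ℝ)) * ((n.choose e : ℕ):ℝ) :=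
            mul_le_mul_of_nonneg_right hcR (Nat.cast_nonneg _)
        _ = (2:ℝ)^mB * ((C.card:ℝ) * ((n.choose e : ℕ):ℝ)) := by ring
        _ ≤ (2:ℝ)^mB * ((2:ℝ)^n * Lb) :=
            mul_le_mul_of_nonneg_left (le_trans hdc hsum) (by positivity)
        _ = (2:ℝ)^n * ((2:ℝ)^mB * Lb) := by ring
    exact le_of_mul_le_mul_left hchain h2n
  -- entropy bound on the binomial coefficient
  have hentR : ((n:ℝ))^n ≤ ((n:ℝ)+1) * (((n.choose e : ℕ):ℝ)
      * ((e:ℝ)^e * ((n:ℝ)-(e:ℝ))^(n-e))) := by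
    have h12 := (Nat.cast_le (α := ℝ)).mpr (choose_entropy_nat n e (le_of_lt hen))
    push_cast [Nat.cast_sub (le_of_lt hen)] at h12
    convert h12 using 2
  have hfinal1 : ((n:ℝ))^n ≤ ((n:ℝ)+1) * ((2:ℝ)^mB) * Lb * ((e:ℝ)^e)
      * (((n:ℝ)-(e:ℝ))^(n-e)) := by
    have h13 : ((n:ℝ)+1) * (((n.choose e : ℕ):ℝ) * ((e:ℝ)^e * ((n:ℝ)-(e:ℝ))^(n-e)))
        ≤ ((n:ℝ)+1) * (((2:ℝ)^mB * Lb) * ((e:ℝ)^e * ((n:ℝ)-(e:ℝ))^(n-e))) := by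
      apply mul_le_mul_of_nonneg_left _ (by linarith)
      apply mul_le_mul_of_nonneg_right hchoose
      have hepos : (0:ℝ) < (e:ℝ) := by exact_mod_cast he1
      have hnepos : (0:ℝ) < (n:ℝ)-(e:ℝ) := by linarith
      positivity
    calc ((n:ℝ))^n ≤ _ := hentR
      _ ≤ _ := h13
      _ = ((n:ℝ)+1) * ((2:ℝ)^mB) * Lb * ((e:ℝ)^e) * (((n:ℝ)-(e:ℝ))^(n-e)) := by ring
  have hepos : (0:ℝ) < (e:ℝ) := by exact_mod_cast he1
  have hnepos : (0:ℝ) < (n:ℝ)-(e:ℝ) := by linarith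
  have pA : (0:ℝ) < (n:ℝ)+1 := by linarith
  have pB : (0:ℝ) < (2:ℝ)^mB := by positivity
  have pE : (0:ℝ) < (e:ℝ)^e := pow_pos hepos e
  have pF : (0:ℝ) < ((n:ℝ)-(e:ℝ))^(n-e) := pow_pos hnepos _
  have hlog := Real.logb_le_logb_of_le (b := 2) one_lt_two
    (show (0:ℝ) < ((n:ℝ))^n by positivity) hfinal1
  rw [Real.logb_pow] at hlog
  rw [Real.logb_mul (ne_of_gt (mul_pos (mul_pos (mul_pos pA pB) hLbpos) pE)) (ne_of_gt pF),
      Real.logb_mul (ne_of_gt (mul_pos (mul_pos pA pB) hLbpos)) (ne_of_gt pE),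
      Real.logb_mul (ne_of_gt (mul_pos pA pB)) (ne_of_gt hLbpos),
      Real.logb_mul (ne_of_gt pA) (ne_of_gt pB),
      Real.logb_pow, Real.logb_pow, Real.logb_pow,
      Real.logb_self_eq_one one_lt_two] at hlog
  -- hlog : n * logb 2 n ≤ logb 2 (n+1) + mB * 1 + logb 2 Lb + e * logb 2 e + (n-e) * logb 2 (n-e)
  have hid := binEnt_div e n he1 hen
  have hcastne : (((n-e : ℕ)):ℝ) = (n:ℝ)-(e:ℝ) := by
    push_cast [Nat.cast_sub (le_of_lt hen)]
    ring
  rw [hcastne] at hlog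
  have hmono := mul_le_mul_of_nonneg_left f3 hn0r
  -- hmono : n * (binEnt α + 7δ) ≤ n * binEnt (e/n)
  rw [hid] at hmono
  linarith [hlog, hmono, f4, hmB]

end SWAux

/-- For small enough `α`, no pair of rates in a `δn`-neighborhood of the corner
points `(n, h(α)n)` and `(h(α)n, n)` is achievable for the deterministic
combinatorial Slepian–Wolf scheme with parameters `(n, ⌊αn⌋)`. -/
theorem stmt18 :
    ∃ α₀ : ℝ, 0 < α₀ ∧ ∀ α : ℝ, 0 < α → α < α₀ →
      ∃ δ : ℝ, 0 < δ ∧ ∃ n₀ : ℕ, ∀ n : ℕ, n₀ ≤ n → ∀ mA mB : ℕ,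
        ((|(mA : ℝ) - n| ≤ δ * n ∧ |(mB : ℝ) - binEnt α * n| ≤ δ * n) ∨
         (|(mA : ℝ) - binEnt α * n| ≤ δ * n ∧ |(mB : ℝ) - n| ≤ δ * n)) →
        ¬ Achievable n ⌊α * n⌋₊ mA mB := by
  refine ⟨1/4, by norm_num, ?_⟩
  intro α hα0 hα
  obtain ⟨δ, hδ0, n₀, hcor⟩ := SWAux.corner hα0 hα
  refine ⟨δ, hδ0, n₀, ?_⟩
  intro n hn mA mB hcase hach
  rcases hcase with ⟨h1, h2⟩ | ⟨h1, h2⟩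
  · have h3 := (abs_le.mp h2).2
    exact hcor n hn mA mB (by linarith) hach
  · have h3 := (abs_le.mp h1).2
    exact hcor n hn mB mA (by linarith) (SWAux.achievable_swap hach)
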